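/- Over the finite field F_q, the number of ordered pairs of coprime monic polynomials of degree n equals q times the number of n×n nonsingular Hankel matrices over F_q. -/

import Mathlib

open Polynomial

/-- A matrix is Hankel if `m i j = m r s` whenever `i + j = r + s`. -/
def IsHankel {F : Type*} {n : ℕ} (M : Matrix (Fin n) (Fin n) F) : Prop :=
  ∀ i j r s : Fin n, (i : ℕ) + (j : ℕ) = (r : ℕ) + (s : ℕ) → M i j = M r s

noncomputable section
namespace HankelAux
variable {F : Type*} [Field F]

def Cs (m : ℕ) (f r : F[X]) : PowerSeries F :=
  ((reflect m r : F[X]) : PowerSeries F) * ((reflect (m+1) f : F[X]) : PowerSeries F)⁻¹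

def ds (m : ℕ) (f r : F[X]) (k : ℕ) : F := PowerSeries.coeff k (Cs m f r)

def mat (m : ℕ) (f r : F[X]) : Matrix (Fin (m+1)) (Fin (m+1)) F :=
  .of fun i j => ds m f r (i + j)

theorem constCoeff_reflect (m : ℕ) {f : F[X]} (hf : f.Monic) (hdeg : f.natDegree = m+1) :
    PowerSeries.constantCoeff ((reflect (m+1) f : F[X]) : PowerSeries F) = 1 := by
  rw [← PowerSeries.coeff_zero_eq_constantCoeff_apply, Polynomial.coeff_coe, coeff_reflect,
    revAt_le (Nat.zero_le _)]
  simp only [Nat.sub_zero]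
  rw [← hdeg]
  exact hf.coeff_natDegree

theorem F_mul_inv (m : ℕ) {f : F[X]} (hf : f.Monic) (hdeg : f.natDegree = m+1) :
    ((reflect (m+1) f : F[X]) : PowerSeries F) * ((reflect (m+1) f : F[X]) : PowerSeries F)⁻¹ = 1 :=
  PowerSeries.mul_inv_cancel _ (by rw [constCoeff_reflect m hf hdeg]; exact one_ne_zero)

theorem F_mul_Cs (m : ℕ) {f : F[X]} (r : F[X]) (hf : f.Monic) (hdeg : f.natDegree = m+1) :
    ((reflect (m+1) f : F[X]) : PowerSeries F) * Cs m f r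
      = ((reflect m r : F[X]) : PowerSeries F) := by
  rw [Cs, mul_comm ((reflect m r : F[X]) : PowerSeries F), ← mul_assoc,
    F_mul_inv m hf hdeg, one_mul]

theorem natDegree_reflect_le {N : ℕ} {p : F[X]} (h : p.natDegree ≤ N) :
    (reflect N p).natDegree ≤ N := by
  rw [natDegree_le_iff_coeff_eq_zero]
  intro k hk
  rw [coeff_reflect]
  have : revAt N k = k := by
    exact revAt_eq_self_of_lt (by omega)
  rw [this]
  exact coeff_eq_zero_of_natDegree_lt (lt_of_le_of_lt h hk)

theorem reflect_reflect (N : ℕ) (p : F[X]) : reflect N (reflect N p) = p := by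
  ext k
  rw [coeff_reflect, coeff_reflect, revAt_invol]

/-- polynomial with coefficients v -/
def pol (m : ℕ) (v : Fin (m+1) → F) : F[X] := ∑ j : Fin (m+1), C (v j) * X ^ (j : ℕ)

theorem pol_coeff (m : ℕ) (v : Fin (m+1) → F) (k : ℕ) :
    (pol m v).coeff k = if h : k < m+1 then v ⟨k, h⟩ else 0 := by
  rw [pol, finset_sum_coeff]
  simp only [coeff_C_mul, coeff_X_pow]
  split
  · next h =>
    rw [Finset.sum_eq_single (⟨k, h⟩ : Fin (m+1))]
    · simp
    · intro b _ hb
      rw [if_neg, mul_zero]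
      intro hkb
      exact hb (Fin.val_injective hkb.symm)
    · simp
  · next h =>
    apply Finset.sum_eq_zero
    intro b _
    rw [if_neg, mul_zero]
    intro hkb
    omega


theorem pol_natDegree_le (m : ℕ) (v : Fin (m+1) → F) : (pol m v).natDegree ≤ m := by
  rw [natDegree_le_iff_coeff_eq_zero]
  intro k hk
  rw [pol_coeff, dif_neg (by omega)]

theorem pol_eq_zero_iff (m : ℕ) (v : Fin (m+1) → F) : pol m v = 0 ↔ v = 0 := by
  constructor
  · intro h
    funext j
    have := congrArg (fun p => Polynomial.coeff p (j : ℕ)) h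
    simpa [pol_coeff, j.isLt] using this
  · rintro rfl
    simp [pol]

theorem pol_coeffs (m : ℕ) {p : F[X]} (hp : p.natDegree ≤ m) :
    pol m (fun j => p.coeff j) = p := by
  ext k
  rw [pol_coeff]
  split
  · rfl
  · next h => exact (coeff_eq_zero_of_natDegree_lt (by omega)).symm

theorem coeff_coe_mul (P : F[X]) (φ : PowerSeries F) {M k : ℕ} (hP : P.natDegree ≤ M)
    (hMk : M ≤ k) :
    PowerSeries.coeff k ((P : PowerSeries F) * φ)
      = ∑ i ∈ Finset.range (M+1), P.coeff i * PowerSeries.coeff (k-i) φ := by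
  rw [PowerSeries.coeff_mul, Finset.Nat.sum_antidiagonal_eq_sum_range_succ_mk]
  simp only [Polynomial.coeff_coe]
  symm
  apply Finset.sum_subset
  · intro i hi
    simp only [Finset.mem_range] at *
    omega
  · intro i _ hi
    simp only [Finset.mem_range] at hi
    rw [coeff_eq_zero_of_natDegree_lt (by omega), zero_mul]

theorem mulVec_coeff (m : ℕ) (f r : F[X]) (v : Fin (m+1) → F) (k : Fin (m+1)) :
    (mat m f r).mulVec v k
      = PowerSeries.coeff (m + k) (((reflect m (pol m v) : F[X]) : PowerSeries F) * Cs m f r) := by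
  rw [coeff_coe_mul _ _ (natDegree_reflect_le (pol_natDegree_le m v)) (by omega)]
  rw [Matrix.mulVec, dotProduct]
  rw [← Fin.sum_univ_eq_sum_range (fun i => (reflect m (pol m v)).coeff i
    * PowerSeries.coeff (m + k - i) (Cs m f r))]
  apply Fintype.sum_equiv (Equiv.subLeft (Fin.last m))
  intro j
  have hj : (j : ℕ) ≤ m := by omega
  have h1 : ((Equiv.subLeft (Fin.last m) j : Fin (m+1)) : ℕ) = m - j := by
    simp only [Equiv.subLeft_apply, Fin.sub_def, Fin.val_last]
    have hh : (m + 1 - (j:ℕ) + m) = (m - (j:ℕ)) + (m+1) := by omega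
    rw [hh, Nat.add_mod_right, Nat.mod_eq_of_lt (by omega)]
  rw [h1, coeff_reflect, revAt_le (by omega)]
  have h2 : m - (m - (j:ℕ)) = j := by omega
  have h3 : m + (k:ℕ) - (m - (j:ℕ)) = (k:ℕ) + (j:ℕ) := by omega
  rw [h2, h3, pol_coeff, dif_pos j.isLt]
  rw [mat]
  simp only [Matrix.of_apply, ds]
  rw [mul_comm]


theorem coe_sub' (p q : F[X]) : ((p - q : F[X]) : PowerSeries F)
    = (p : PowerSeries F) - (q : PowerSeries F) :=
  map_sub Polynomial.coeToPowerSeries.ringHom p q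

theorem coeff_eq_zero_of_dvd (m : ℕ) {f r p : F[X]} (hf : f.Monic) (hdeg : f.natDegree = m+1)
    (hr : r.natDegree ≤ m) (hp : p.natDegree ≤ m) (hdvd : f ∣ p * r) {k : ℕ} (hk : m ≤ k) :
    PowerSeries.coeff k (((reflect m p : F[X]) : PowerSeries F) * Cs m f r) = 0 := by
  rcases eq_or_ne r 0 with rfl | hr0
  · rw [Cs, reflect_zero, Polynomial.coe_zero, zero_mul, mul_zero, map_zero]
  rcases eq_or_ne p 0 with rfl | hp0
  · rw [reflect_zero, Polynomial.coe_zero, zero_mul, map_zero]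
  obtain ⟨u, hu⟩ := hdvd
  have hf0 : f ≠ 0 := hf.ne_zero
  have hu0 : u ≠ 0 := by
    rintro rfl
    rw [mul_zero] at hu
    exact mul_ne_zero hp0 hr0 hu
  have hdegs : natDegree (p * r) = m + 1 + natDegree u := by
    rw [hu, natDegree_mul hf0 hu0, hdeg]
  have hle : natDegree (p * r) ≤ 2 * m := le_trans (natDegree_mul_le) (by omega)
  have hum : natDegree u ≤ m - 1 := by omega
  have hm1 : 1 ≤ m := by omega
  obtain ⟨m', rfl⟩ : ∃ m', m = m' + 1 := ⟨m - 1, by omega⟩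
  have key : reflect (m'+1) p * reflect (m'+1) r = reflect (m'+2) f * reflect m' u := by
    have h1 := reflect_mul p r hp hr
    have h2 := reflect_mul f u (le_of_eq hdeg) (show u.natDegree ≤ m' by omega)
    have e : m' + 1 + (m' + 1) = m' + 2 + m' := by ring
    rw [← h1, hu, e, h2]
  have hmain : ((reflect (m'+1) p : F[X]) : PowerSeries F) * Cs (m'+1) f r
      = ((reflect m' u : F[X]) : PowerSeries F) := by
    rw [Cs, ← mul_assoc, ← Polynomial.coe_mul, key, Polynomial.coe_mul, mul_assoc,
      mul_comm, mul_assoc]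
    rw [mul_comm (((reflect (m'+2) f : F[X]) : PowerSeries F))⁻¹, F_mul_inv (m'+1) hf hdeg,
      mul_one]
  rw [hmain, Polynomial.coeff_coe]
  exact coeff_eq_zero_of_natDegree_lt
    (lt_of_le_of_lt (natDegree_reflect_le (show u.natDegree ≤ m' by omega)) (by omega))

theorem dvd_of_coeff_eq_zero (m : ℕ) {f r p : F[X]} (hf : f.Monic) (hdeg : f.natDegree = m+1)
    (hr : r.natDegree ≤ m) (hp : p.natDegree ≤ m)
    (h0 : ∀ k, m ≤ k → k ≤ 2*m →
      PowerSeries.coeff k (((reflect m p : F[X]) : PowerSeries F) * Cs m f r) = 0) :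
    f ∣ p * r := by
  set W : PowerSeries F := ((reflect m p : F[X]) : PowerSeries F) * Cs m f r with hW
  set W0 : F[X] := PowerSeries.trunc m W with hW0def
  have hW0coeff : ∀ k, m ≤ k → W0.coeff k = 0 := by
    intro k hk
    rw [hW0def, PowerSeries.coeff_trunc, if_neg (by omega)]
  have hW0deg : W0.natDegree ≤ m := by
    rw [natDegree_le_iff_coeff_eq_zero]
    intro N hN
    exact hW0coeff N (by omega)
  have hFW : ((reflect (m+1) f : F[X]) : PowerSeries F) * W
      = ((reflect m p * reflect m r : F[X]) : PowerSeries F) := by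
    rw [hW, Polynomial.coe_mul, Cs]
    calc ((reflect (m+1) f : F[X]) : PowerSeries F) * (((reflect m p : F[X]) : PowerSeries F) *
          (((reflect m r : F[X]) : PowerSeries F) * ((reflect (m+1) f : F[X]) : PowerSeries F)⁻¹))
        = ((reflect m p : F[X]) : PowerSeries F) * ((reflect m r : F[X]) : PowerSeries F) *
          (((reflect (m+1) f : F[X]) : PowerSeries F) *
            ((reflect (m+1) f : F[X]) : PowerSeries F)⁻¹) := by ring
      _ = _ := by rw [F_mul_inv m hf hdeg, mul_one]
  have hdvdX : (PowerSeries.X : PowerSeries F)^(2*m+1) ∣ (W - (W0 : PowerSeries F)) := by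
    rw [PowerSeries.X_pow_dvd_iff]
    intro k hk
    rw [map_sub, Polynomial.coeff_coe]
    rcases lt_or_ge k m with h | h
    · rw [hW0def, PowerSeries.coeff_trunc, if_pos h, sub_self]
    · rw [hW0coeff k h, h0 k h (by omega), sub_zero]
  have hFW0deg : natDegree (reflect (m+1) f * W0) ≤ 2*m := by
    rcases Nat.eq_zero_or_pos m with rfl | hm
    · have hz : W0 = 0 := by
        ext k
        rw [hW0def, PowerSeries.coeff_trunc, if_neg (by omega), coeff_zero]
      rw [hz, mul_zero, natDegree_zero]
    · have hd : W0.natDegree ≤ m - 1 := by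
        rw [natDegree_le_iff_coeff_eq_zero]
        intro N hN
        exact hW0coeff N (by omega)
      refine le_trans natDegree_mul_le ?_
      have := natDegree_reflect_le (le_of_eq hdeg)
      omega
  have hQ : reflect m p * reflect m r - reflect (m+1) f * W0 = 0 := by
    have hcast : ((reflect m p * reflect m r - reflect (m+1) f * W0 : F[X]) : PowerSeries F)
        = ((reflect (m+1) f : F[X]) : PowerSeries F) * (W - (W0 : PowerSeries F)) := by
      simp only [coe_sub', mul_sub, hFW, Polynomial.coe_mul]
    have hdvd2 : (PowerSeries.X : PowerSeries F)^(2*m+1) ∣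
        ((reflect m p * reflect m r - reflect (m+1) f * W0 : F[X]) : PowerSeries F) := by
      rw [hcast]
      exact Dvd.dvd.mul_left hdvdX _
    rw [PowerSeries.X_pow_dvd_iff] at hdvd2
    ext k
    rcases lt_or_ge k (2*m+1) with h | h
    · have := hdvd2 k h
      rwa [Polynomial.coeff_coe] at this
    · rw [coeff_sub, coeff_zero]
      rw [coeff_eq_zero_of_natDegree_lt, coeff_eq_zero_of_natDegree_lt, sub_self]
      · exact lt_of_le_of_lt hFW0deg (by omega)
      · calc natDegree (reflect m p * reflect m r) ≤ m + m := by
              refine le_trans natDegree_mul_le ?_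
              exact Nat.add_le_add (natDegree_reflect_le hp) (natDegree_reflect_le hr)
          _ < k := by omega
  have hPR : reflect m p * reflect m r = reflect (m+1) f * W0 := by
    have := sub_eq_zero.mp hQ
    exact this
  -- Now un-reflect.
  have hpr_deg : natDegree (p * r) ≤ 2*m := le_trans natDegree_mul_le (by omega)
  have hrefl : reflect (m+m) (p * r) = reflect m p * reflect m r := reflect_mul p r hp hr
  rcases Nat.eq_zero_or_pos m with rfl | hm
  · -- m = 0 : W0 = trunc 0 W = 0
    have : W0 = 0 := by
      ext k
      rw [hW0def, PowerSeries.coeff_trunc, if_neg (by omega), coeff_zero]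
    rw [this, mul_zero] at hPR
    have hpr0 : p * r = 0 := by
      have h2 := congrArg (reflect (0+0)) hrefl
      rw [reflect_reflect, hPR, reflect_zero] at h2
      exact h2
    rw [hpr0]
    exact dvd_zero f
  · obtain ⟨m', rfl⟩ : ∃ m', m = m' + 1 := ⟨m - 1, by omega⟩
    have hW0deg' : W0.natDegree ≤ m' := by
      rw [natDegree_le_iff_coeff_eq_zero]
      intro N hN
      exact hW0coeff N (by omega)
    have hsplit : reflect (m'+2+m') (reflect (m'+1+1) f * W0)
        = reflect (m'+2) (reflect (m'+2) f) * reflect m' W0 :=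
      reflect_mul _ _ (natDegree_reflect_le (le_of_eq hdeg)) hW0deg'
    have e : m' + 1 + (m' + 1) = m' + 2 + m' := by ring
    have h2 := congrArg (reflect (m'+1+(m'+1))) hrefl
    rw [reflect_reflect, hPR] at h2
    rw [h2, e, hsplit, reflect_reflect]
    exact Dvd.intro _ rfl


theorem det_ne_zero (m : ℕ) {f r : F[X]} (hf : f.Monic) (hdeg : f.natDegree = m+1)
    (hr : r.natDegree ≤ m) (hc : IsCoprime f r) : (mat m f r).det ≠ 0 := by
  intro hdet
  obtain ⟨v, hv0, hv⟩ := (Matrix.exists_mulVec_eq_zero_iff).mpr hdet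
  have hcoeffs : ∀ k, m ≤ k → k ≤ 2*m →
      PowerSeries.coeff k (((reflect m (pol m v) : F[X]) : PowerSeries F) * Cs m f r) = 0 := by
    intro k h1 h2
    have hk : k - m < m + 1 := by omega
    have h3 := congrFun hv ⟨k - m, hk⟩
    rw [mulVec_coeff] at h3
    have he : m + ((⟨k - m, hk⟩ : Fin (m+1)) : ℕ) = k := by simp; omega
    rw [he] at h3
    exact h3
  have hdvd := dvd_of_coeff_eq_zero m hf hdeg hr (pol_natDegree_le m v) hcoeffs
  have hdvd2 : f ∣ pol m v := hc.dvd_of_dvd_mul_right hdvd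
  rcases eq_or_ne (pol m v) 0 with h | h
  · exact hv0 ((pol_eq_zero_iff m v).mp h)
  · have := Polynomial.natDegree_le_of_dvd hdvd2 h
    have := pol_natDegree_le m v
    omega

theorem det_eq_zero (m : ℕ) {f r : F[X]} (hf : f.Monic) (hdeg : f.natDegree = m+1)
    (hr : r.natDegree ≤ m) (hnc : ¬ IsCoprime f r) : (mat m f r).det = 0 := by
  classical
  have hf0 : f ≠ 0 := hf.ne_zero
  set g := EuclideanDomain.gcd f r with hg
  have hgf : g ∣ f := EuclideanDomain.gcd_dvd_left f r
  have hgr : g ∣ r := EuclideanDomain.gcd_dvd_right f r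
  have hgU : ¬ IsUnit g := fun h => hnc (EuclideanDomain.gcd_isUnit_iff.mp h)
  have hg0 : g ≠ 0 := by
    rintro h
    rw [h] at hgf
    exact hf0 (zero_dvd_iff.mp hgf)
  have hgdeg : 1 ≤ g.natDegree := by
    by_contra h
    push_neg at h
    obtain ⟨a, ha⟩ := Polynomial.natDegree_eq_zero.mp (show g.natDegree = 0 by omega)
    have ha0 : a ≠ 0 := by rintro rfl; rw [map_zero] at ha; exact hg0 ha.symm
    exact hgU (ha ▸ (Polynomial.isUnit_C.mpr (isUnit_iff_ne_zero.mpr ha0)))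
  obtain ⟨p, hp⟩ := hgf
  have hp0 : p ≠ 0 := by rintro rfl; rw [mul_zero] at hp; exact hf0 hp
  have hpdeg : p.natDegree ≤ m := by
    have := Polynomial.natDegree_mul hg0 hp0
    rw [← hp, hdeg] at this
    omega
  obtain ⟨r', hr'⟩ := hgr
  have hfdvd : f ∣ p * r := ⟨r', by rw [hr', hp]; ring⟩
  set v : Fin (m+1) → F := fun j => p.coeff j with hv
  have hpv : pol m v = p := pol_coeffs m hpdeg
  have hv0 : v ≠ 0 := by
    intro h
    exact hp0 (by rw [← hpv, h, (pol_eq_zero_iff m 0).mpr rfl])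
  have hmv : (mat m f r).mulVec v = 0 := by
    funext k
    rw [mulVec_coeff, Pi.zero_apply, hpv]
    exact coeff_eq_zero_of_dvd m hf hdeg hr hpdeg hfdvd (by omega)
  exact Matrix.exists_mulVec_eq_zero_iff.mp ⟨v, hv0, hmv⟩


theorem pair_ext (m : ℕ) {f r f' r' : F[X]} (hf : f.Monic) (hdeg : f.natDegree = m+1)
    (hr : r.natDegree ≤ m) (hc : IsCoprime f r)
    (hf' : f'.Monic) (hdeg' : f'.natDegree = m+1) (hr' : r'.natDegree ≤ m)
    (h : ∀ k, k ≤ 2*m+1 → ds m f r k = ds m f' r' k) : f = f' ∧ r = r' := by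
  have hdvdX : (PowerSeries.X : PowerSeries F)^(2*m+2) ∣ (Cs m f r - Cs m f' r') := by
    rw [PowerSeries.X_pow_dvd_iff]
    intro k hk
    rw [map_sub]
    have := h k (by omega)
    rw [ds, ds] at this
    rw [this, sub_self]
  set Q : F[X] := reflect (m+1) f' * reflect m r - reflect (m+1) f * reflect m r' with hQdef
  have hcast : (Q : PowerSeries F)
      = (((reflect (m+1) f : F[X]) : PowerSeries F) * ((reflect (m+1) f' : F[X]) : PowerSeries F))
        * (Cs m f r - Cs m f' r') := by
    rw [hQdef, coe_sub', Polynomial.coe_mul, Polynomial.coe_mul]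
    rw [mul_sub]
    congr 1
    · rw [← F_mul_Cs m r hf hdeg]
      ring
    · rw [← F_mul_Cs m r' hf' hdeg']
      ring
  have hQ : Q = 0 := by
    have hdvd2 : (PowerSeries.X : PowerSeries F)^(2*m+2) ∣ (Q : PowerSeries F) := by
      rw [hcast]
      exact Dvd.dvd.mul_left hdvdX _
    rw [PowerSeries.X_pow_dvd_iff] at hdvd2
    ext k
    rcases lt_or_ge k (2*m+2) with hk | hk
    · have := hdvd2 k hk
      rwa [Polynomial.coeff_coe] at this
    · rw [coeff_zero]
      apply coeff_eq_zero_of_natDegree_lt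
      refine lt_of_le_of_lt (natDegree_sub_le _ _) ?_
      have b1 : natDegree (reflect (m+1) f' * reflect m r) ≤ (m+1) + m :=
        le_trans natDegree_mul_le
          (Nat.add_le_add (natDegree_reflect_le (le_of_eq hdeg')) (natDegree_reflect_le hr))
      have b2 : natDegree (reflect (m+1) f * reflect m r') ≤ (m+1) + m :=
        le_trans natDegree_mul_le
          (Nat.add_le_add (natDegree_reflect_le (le_of_eq hdeg)) (natDegree_reflect_le hr'))
      omega
  have hPR : reflect (m+1) f' * reflect m r = reflect (m+1) f * reflect m r' :=
    sub_eq_zero.mp hQ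
  have hfr : f' * r = f * r' := by
    have h1 : reflect ((m+1)+m) (reflect (m+1) f' * reflect m r)
        = f' * r := by
      rw [reflect_mul _ _ (natDegree_reflect_le (le_of_eq hdeg')) (natDegree_reflect_le hr),
        reflect_reflect, reflect_reflect]
    have h2 : reflect ((m+1)+m) (reflect (m+1) f * reflect m r')
        = f * r' := by
      rw [reflect_mul _ _ (natDegree_reflect_le (le_of_eq hdeg)) (natDegree_reflect_le hr'),
        reflect_reflect, reflect_reflect]
    rw [← h1, ← h2, hPR]
  have hf0 : f ≠ 0 := hf.ne_zero
  have hff' : f = f' := by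
    have hdvd : f ∣ f' := by
      refine hc.dvd_of_dvd_mul_right ?_
      rw [hfr]
      exact dvd_mul_right f r'
    obtain ⟨c, hcq⟩ := hdvd
    have hc0 : c ≠ 0 := by rintro rfl; rw [mul_zero] at hcq; exact hf'.ne_zero hcq
    have hcdeg : c.natDegree = 0 := by
      have := Polynomial.natDegree_mul hf0 hc0
      rw [← hcq, hdeg', hdeg] at this
      omega
    obtain ⟨a, ha⟩ := Polynomial.natDegree_eq_zero.mp hcdeg
    have ha1 : a = 1 := by
      have hlc := hf'.leadingCoeff
      rw [hcq, leadingCoeff_mul, hf.leadingCoeff, one_mul, ← ha, leadingCoeff_C] at hlc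
      exact hlc
    rw [hcq, ← ha, ha1, map_one, mul_one]
  refine ⟨hff', ?_⟩
  rw [← hff'] at hfr
  exact (mul_left_cancel₀ hf0 hfr.symm).symm


theorem surj_aux (m : ℕ) (M : Matrix (Fin (m+1)) (Fin (m+1)) F)
    (hH : ∀ i j r s : Fin (m+1), (i : ℕ) + (j : ℕ) = (r : ℕ) + (s : ℕ) → M i j = M r s)
    (hdet : IsUnit M.det) (a : F) :
    ∃ f r : F[X], f.Monic ∧ f.natDegree = m+1 ∧ r.natDegree ≤ m ∧ IsCoprime f r ∧
      mat m f r = M ∧ ds m f r (2*m+1) = a := by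
  classical
  set dd : ℕ → F := fun k =>
    if hk : k ≤ 2*m then M ⟨min k m, by omega⟩ ⟨k - min k m, by omega⟩
    else if k = 2*m+1 then a else 0 with hdd
  have hMdd : ∀ i j : Fin (m+1), M i j = dd ((i:ℕ)+(j:ℕ)) := by
    intro i j
    have hk : (i:ℕ)+(j:ℕ) ≤ 2*m := by omega
    rw [hdd]
    simp only [dif_pos hk]
    exact hH i j _ _ (by simp)
  set fv : Fin (m+1) → F := (-(M⁻¹)).mulVec (fun k => dd ((k:ℕ) + (m+1))) with hfv
  set f : F[X] := X^(m+1) + pol m fv with hfdef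
  have hpoldeg : (pol m fv).degree < ((m+1 : ℕ) : WithBot ℕ) :=
    lt_of_le_of_lt degree_le_natDegree
      (by exact_mod_cast Nat.lt_succ_of_le (pol_natDegree_le m fv))
  have hfmonic : f.Monic := monic_X_pow_add hpoldeg
  have hfdeg : f.natDegree = m+1 := by
    apply natDegree_eq_of_degree_eq_some
    rw [hfdef, degree_add_eq_left_of_degree_lt (by rw [degree_X_pow]; exact hpoldeg),
      degree_X_pow]
  have hfcoeff : ∀ j : Fin (m+1), f.coeff (j:ℕ) = fv j := by
    intro j
    rw [hfdef, coeff_add, coeff_X_pow, if_neg (by omega), pol_coeff, dif_pos j.isLt, zero_add,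
      Fin.eta]
  have hfcoefftop : f.coeff (m+1) = 1 := by
    have := hfmonic.coeff_natDegree
    rwa [hfdeg] at this
  have hsys : ∀ k : Fin (m+1),
      (∑ i : Fin (m+1), dd ((k:ℕ)+(i:ℕ)) * fv i) + dd ((k:ℕ) + (m+1)) = 0 := by
    have hMv : M.mulVec fv = -(fun k : Fin (m+1) => dd ((k:ℕ)+(m+1))) := by
      rw [hfv, Matrix.neg_mulVec, Matrix.mulVec_neg, Matrix.mulVec_mulVec,
        Matrix.mul_nonsing_inv M hdet, Matrix.one_mulVec]
    intro k
    have h1 := congrFun hMv k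
    rw [Matrix.mulVec, dotProduct] at h1
    simp only [hMdd] at h1
    rw [Pi.neg_apply] at h1
    rw [h1]
    exact neg_add_cancel _
  have hrec : ∀ k, m+1 ≤ k → k ≤ 2*m+1 →
      ∑ i ∈ Finset.range (m+2), (reflect (m+1) f).coeff i * dd (k - i) = 0 := by
    intro k h1 h2
    have step1 : ∀ i ∈ Finset.range (m+2), (reflect (m+1) f).coeff i * dd (k-i)
        = f.coeff (m+1-i) * dd (k-i) := by
      intro i hi
      simp only [Finset.mem_range] at hi
      rw [coeff_reflect, revAt_le (by omega)]
    rw [Finset.sum_congr rfl step1]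
    have hrefl := Finset.sum_range_reflect (fun j => f.coeff j * dd (k-(m+1)+j)) (m+2)
    have e1 : ∀ j ∈ Finset.range (m+2),
        f.coeff (m+2-1-j) * dd (k-(m+1)+(m+2-1-j)) = f.coeff (m+1-j) * dd (k-j) := by
      intro j hj
      simp only [Finset.mem_range] at hj
      have e2 : m+2-1-j = m+1-j := by omega
      have e3 : k-(m+1)+(m+1-j) = k-j := by omega
      rw [e2, e3]
    rw [Finset.sum_congr rfl e1] at hrefl
    rw [hrefl, Finset.sum_range_succ, hfcoefftop, one_mul]
    have e4 : k-(m+1)+(m+1) = k := by omega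
    rw [e4]
    have hklt : k - (m+1) < m+1 := by omega
    have h5 := hsys ⟨k-(m+1), hklt⟩
    rw [← Fin.sum_univ_eq_sum_range (fun x => f.coeff x * dd (k-(m+1)+x)) (m+1)]
    calc (∑ i : Fin (m+1), f.coeff (i:ℕ) * dd (k-(m+1)+(i:ℕ))) + dd k
        = (∑ i : Fin (m+1), dd (((⟨k-(m+1),hklt⟩ : Fin (m+1)) : ℕ) + (i:ℕ)) * fv i)
          + dd (((⟨k-(m+1),hklt⟩ : Fin (m+1)) : ℕ) + (m+1)) := by
          congr 1
          · apply Finset.sum_congr rfl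
            intro i _
            rw [hfcoeff i, mul_comm]
          · congr 1
            simp
            omega
      _ = 0 := h5
  set Dps : PowerSeries F := PowerSeries.mk (fun k => dd k) with hDps
  set Rt : F[X] := PowerSeries.trunc (m+1)
    (((reflect (m+1) f : F[X]) : PowerSeries F) * Dps) with hRtdef
  set r : F[X] := reflect m Rt with hrdef
  have hRtdeg : Rt.natDegree ≤ m := by
    rw [hRtdef]
    exact Nat.lt_succ_iff.mp (PowerSeries.natDegree_trunc_lt _ m)
  have hrdeg : r.natDegree ≤ m := natDegree_reflect_le hRtdeg
  have hreflr : reflect m r = Rt := by rw [hrdef, reflect_reflect]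
  have hcoeffFD : ∀ k, m+1 ≤ k → k ≤ 2*m+1 →
      PowerSeries.coeff k (((reflect (m+1) f : F[X]) : PowerSeries F) * Dps) = 0 := by
    intro k hk1 hk2
    rw [coeff_coe_mul _ _ (natDegree_reflect_le (le_of_eq hfdeg)) hk1]
    have : ∀ i ∈ Finset.range (m+2), (reflect (m+1) f).coeff i * PowerSeries.coeff (k-i) Dps
        = (reflect (m+1) f).coeff i * dd (k-i) := by
      intro i _
      rw [hDps, PowerSeries.coeff_mk]
    rw [Finset.sum_congr rfl this]
    exact hrec k hk1 hk2
  have hdvdX : (PowerSeries.X : PowerSeries F)^(2*m+2)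
      ∣ ((Rt : F[X]) : PowerSeries F) - ((reflect (m+1) f : F[X]) : PowerSeries F) * Dps := by
    rw [PowerSeries.X_pow_dvd_iff]
    intro k hk
    rw [map_sub, Polynomial.coeff_coe]
    rcases lt_or_ge k (m+1) with h | h
    · rw [hRtdef, PowerSeries.coeff_trunc, if_pos h, sub_self]
    · rw [coeff_eq_zero_of_natDegree_lt (by omega), hcoeffFD k h (by omega), sub_zero]
  have hCsdd : ∀ k, k ≤ 2*m+1 → ds m f r k = dd k := by
    intro k hk
    have hsub : Cs m f r - Dps
        = (((Rt : F[X]) : PowerSeries F)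
            - ((reflect (m+1) f : F[X]) : PowerSeries F) * Dps)
          * ((reflect (m+1) f : F[X]) : PowerSeries F)⁻¹ := by
      rw [Cs, hreflr, sub_mul, mul_comm ((reflect (m+1) f : F[X]) : PowerSeries F) Dps,
        mul_assoc, F_mul_inv m hfmonic hfdeg, mul_one]
    have hdvd2 : (PowerSeries.X : PowerSeries F)^(2*m+2) ∣ (Cs m f r - Dps) := by
      rw [hsub]
      exact hdvdX.mul_right _
    rw [PowerSeries.X_pow_dvd_iff] at hdvd2
    have h3 := hdvd2 k (by omega)
    rw [map_sub, sub_eq_zero] at h3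
    rw [ds, h3, hDps, PowerSeries.coeff_mk]
  have hmatM : mat m f r = M := by
    ext i j
    rw [mat, Matrix.of_apply, hCsdd ((i:ℕ)+(j:ℕ)) (by omega), ← hMdd i j]
  have hcop : IsCoprime f r := by
    by_contra hnc
    have h0 := det_eq_zero m hfmonic hfdeg hrdeg hnc
    rw [hmatM] at h0
    exact (isUnit_iff_ne_zero.mp (hdet.map (MonoidHom.id F)) ) h0
  have hlast : ds m f r (2*m+1) = a := by
    rw [hCsdd (2*m+1) (le_refl _), hdd]
    simp only [dif_neg (by omega : ¬ (2*m+1 ≤ 2*m))]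
    simp
  exact ⟨f, r, hfmonic, hfdeg, hrdeg, hcop, hmatM, hlast⟩

theorem mat_entry (m : ℕ) (f r : F[X]) (i j : Fin (m+1)) :
    mat m f r i j = ds m f r ((i:ℕ)+(j:ℕ)) := rfl

theorem ds_eq_of_mat_eq (m : ℕ) {f r f' r' : F[X]} (h : mat m f r = mat m f' r')
    {k : ℕ} (hk : k ≤ 2*m) : ds m f r k = ds m f' r' k := by
  have hi : min k m < m + 1 := by omega
  have hj : k - min k m < m + 1 := by omega
  have := congrFun (congrFun h ⟨min k m, hi⟩) ⟨k - min k m, hj⟩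
  rw [mat_entry, mat_entry] at this
  have he : ((⟨min k m, hi⟩ : Fin (m+1)) : ℕ) + ((⟨k - min k m, hj⟩ : Fin (m+1)) : ℕ) = k := by
    simp only [Fin.val_mk]
    omega
  rwa [he] at this

theorem card_key (m : ℕ) :
    Nat.card {p : F[X] × F[X] //
        p.1.Monic ∧ p.1.natDegree = m+1 ∧ p.2.Monic ∧ p.2.natDegree = m+1 ∧ IsCoprime p.1 p.2}
      = Nat.card F *
          Nat.card {M : Matrix (Fin (m+1)) (Fin (m+1)) F // IsHankel M ∧ IsUnit M.det} := by
  classical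
  set B := {p : F[X] × F[X] //
      p.1.Monic ∧ p.1.natDegree = m+1 ∧ p.2.natDegree ≤ m ∧ IsCoprime p.1 p.2} with hB
  -- Equivalence 1
  have e1 : {p : F[X] × F[X] //
      p.1.Monic ∧ p.1.natDegree = m+1 ∧ p.2.Monic ∧ p.2.natDegree = m+1 ∧ IsCoprime p.1 p.2}
      ≃ B := by
    refine ⟨fun b => ⟨(b.1.1, b.1.2 - b.1.1), ?_⟩, fun b => ⟨(b.1.1, b.1.1 + b.1.2), ?_⟩,
      fun b => ?_, fun b => ?_⟩
    · obtain ⟨⟨f, g⟩, h1, h2, h3, h4, h5⟩ := b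
      dsimp only at h1 h2 h3 h4 h5 ⊢
      refine ⟨h1, h2, ?_, ?_⟩
      · rw [natDegree_le_iff_coeff_eq_zero]
        intro N hN
        rcases eq_or_ne N (m+1) with rfl | hne
        · have hgc : g.coeff (m+1) = 1 := by rw [← h4]; exact h3.coeff_natDegree
          have hfc : f.coeff (m+1) = 1 := by rw [← h2]; exact h1.coeff_natDegree
          rw [coeff_sub, hgc, hfc, sub_self]
        · rw [coeff_sub, coeff_eq_zero_of_natDegree_lt (by omega),
            coeff_eq_zero_of_natDegree_lt (by omega), sub_self]
      · have := h5.add_mul_left_right (-1)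
        rwa [show g + f * (-1) = g - f by ring] at this
    · obtain ⟨⟨f, r⟩, h1, h2, h3, h4⟩ := b
      dsimp only at h1 h2 h3 h4 ⊢
      have hdr : r.degree < f.degree := by
        rw [Polynomial.degree_eq_natDegree h1.ne_zero, h2]
        refine lt_of_le_of_lt degree_le_natDegree ?_
        exact_mod_cast Nat.lt_succ_of_le h3
      have hdeg : (f + r).degree = f.degree := degree_add_eq_left_of_degree_lt hdr
      refine ⟨h1, h2, h1.add_of_left hdr, ?_, ?_⟩
      · apply natDegree_eq_of_degree_eq_some
        rw [hdeg, Polynomial.degree_eq_natDegree h1.ne_zero, h2]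
      · have := h4.add_mul_left_right 1
        rwa [show r + f * 1 = f + r by ring] at this
    · apply Subtype.ext
      show (b.1.1, b.1.1 + (b.1.2 - b.1.1)) = b.1
      rw [add_sub_cancel]
    · apply Subtype.ext
      show (b.1.1, (b.1.1 + b.1.2) - b.1.1) = b.1
      rw [add_sub_cancel_left]
  -- Equivalence 2
  set H := {M : Matrix (Fin (m+1)) (Fin (m+1)) F // IsHankel M ∧ IsUnit M.det} with hH
  have e2 : B ≃ F × H := by
    refine Equiv.ofBijective (fun b => (ds m b.1.1 b.1.2 (2*m+1),
      ⟨mat m b.1.1 b.1.2, fun i j r s h => ?_, ?_⟩)) ⟨?_, ?_⟩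
    · rw [mat_entry, mat_entry, h]
    · exact isUnit_iff_ne_zero.mpr (det_ne_zero m b.2.1 b.2.2.1 b.2.2.2.1 b.2.2.2.2)
    · rintro ⟨⟨f, r⟩, h1, h2, h3, h4⟩ ⟨⟨f', r'⟩, h1', h2', h3', h4'⟩ heq
      simp only [Prod.mk.injEq, Subtype.mk.injEq, Subtype.ext_iff] at heq
      obtain ⟨hds, hmat⟩ := heq
      have hmat2 : mat m f r = mat m f' r' := congrArg Subtype.val hmat
      have hall : ∀ k, k ≤ 2*m+1 → ds m f r k = ds m f' r' k := by
        intro k hk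
        rcases eq_or_ne k (2*m+1) with rfl | hne
        · exact hds
        · exact ds_eq_of_mat_eq m hmat2 (by omega)
      obtain ⟨hff, hrr⟩ := pair_ext m h1 h2 h3 h4 h1' h2' h3' hall
      apply Subtype.ext
      rw [Prod.ext_iff]
      exact ⟨hff, hrr⟩
    · rintro ⟨a, ⟨M, hHa, hdet⟩⟩
      obtain ⟨f, r, hf1, hf2, hr1, hc, hmat, hlast⟩ := surj_aux m M hHa hdet a
      refine ⟨⟨(f, r), hf1, hf2, hr1, hc⟩, ?_⟩
      simp only [Prod.mk.injEq, Subtype.mk.injEq]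
      exact ⟨hlast, Subtype.ext hmat⟩
  rw [Nat.card_congr (e1.trans e2), Nat.card_prod]

end HankelAux
end

/-- Over `F_q`, the number of ordered pairs of coprime monic polynomials of degree `n`
equals `q` times the number of `n × n` nonsingular Hankel matrices. -/
theorem coprime_pairs_eq_q_mul_hankel (F : Type*) [Field F] [Fintype F] (n : ℕ)
    (hn : 1 ≤ n) :
    Nat.card {p : F[X] × F[X] //
        p.1.Monic ∧ p.1.natDegree = n ∧ p.2.Monic ∧ p.2.natDegree = n ∧ IsCoprime p.1 p.2}
      = Fintype.card F *
          Nat.card {M : Matrix (Fin n) (Fin n) F // IsHankel M ∧ IsUnit M.det} := by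
  obtain ⟨m, rfl⟩ : ∃ m, n = m + 1 := ⟨n - 1, by omega⟩
  rw [HankelAux.card_key m, Nat.card_eq_fintype_card]
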